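/- Let {P_θ : θ ∈ 𝕋} be a family of probability measures on a measurable space 𝕏, η : 𝕏 × 𝕋 → [0,1] with x ↦ η(x,θ) measurable for each θ, and π_x(θ) = P_θ({x' : η(x',θ) ≤ η(x,θ)}). For α ∈ [0,1] define the set C_α(x) = {θ ∈ 𝕋 : π_x(θ) > α}. Then for every θ ∈ 𝕋, P_θ({x : θ ∈ C_α(x)}) ≥ 1 − α, i.e., the coverage probability of C_α is bounded below by 1 − α. -/

import Mathlib

open MeasureTheory
open scoped ENNReal

/-- Coverage: the confidence set `C_α(x) = {θ : π_x(θ) > α}`, obtained by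
thresholding the possibility contour `π_x(θ) = P_θ {x' : η(x',θ) ≤ η(x,θ)}`,
has coverage probability at least `1 - α` under every `θ`. -/
theorem im_confidence_coverage {X T : Type*} [MeasurableSpace X]
    (P : T → Measure X) (hP : ∀ θ, IsProbabilityMeasure (P θ))
    (η : X → T → ℝ) (hη : ∀ x θ, η x θ ∈ Set.Icc (0 : ℝ) 1)
    (hmeas : ∀ θ, Measurable fun x => η x θ)
    (α : ℝ≥0∞) (hα : α ≤ 1) :
    ∀ θ : T,
      1 - α ≤ P θ {x | θ ∈ {ϑ : T | α < P ϑ {x' | η x' ϑ ≤ η x ϑ}}} := by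
  intro θ
  set g : X → ℝ≥0∞ := fun x => P θ {x' | η x' θ ≤ η x θ} with hg
  set A : Set X := {x | g x ≤ α} with hA
  have key : P θ A ≤ α := by
    rcases Set.eq_empty_or_nonempty A with h | ⟨x0, hx0⟩
    · simp [h]
    · have hbdd : BddAbove ((fun x => η x θ) '' A) := by
        refine ⟨1, ?_⟩
        rintro t ⟨x, _, rfl⟩
        exact (hη x θ).2
      set c := sSup ((fun x => η x θ) '' A) with hc
      by_cases hatt : ∃ x ∈ A, η x θ = c
      · obtain ⟨x, hxA, hxc⟩ := hatt
        calc P θ A ≤ P θ {x' | η x' θ ≤ η x θ} := by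
              apply measure_mono
              intro y hy
              have : η y θ ≤ c := le_csSup hbdd ⟨y, hy, rfl⟩
              simpa [hxc] using this
          _ ≤ α := hxA
      · push_neg at hatt
        have hlt : ∀ y ∈ A, η y θ < c :=
          fun y hy => lt_of_le_of_ne (le_csSup hbdd ⟨y, hy, rfl⟩) (hatt y hy)
        have hseq : ∀ n : ℕ, ∃ x ∈ A, c - 1 / (n + 1) < η x θ := by
          intro n
          have h1 : c - 1 / (n + 1) < c := by
            have : (0 : ℝ) < 1 / (n + 1) := by positivity
            linarith
          obtain ⟨t, htmem, ht⟩ :=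
            exists_lt_of_lt_csSup (⟨_, Set.mem_image_of_mem _ hx0⟩) h1
          obtain ⟨x, hxA, rfl⟩ := htmem
          exact ⟨x, hxA, ht⟩
        choose xs hxsA hxs using hseq
        have hsub : A ⊆ ⋃ n, {x' | η x' θ ≤ η (xs n) θ} := by
          intro y hy
          have hyc := hlt y hy
          obtain ⟨n, hn⟩ := exists_nat_one_div_lt (sub_pos.2 hyc)
          refine Set.mem_iUnion.2 ⟨n, ?_⟩
          have h2 := hxs n
          simp only [Set.mem_setOf_eq]
          have : (1 : ℝ) / (n + 1) < c - η y θ := by exact_mod_cast hn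
          linarith
        have hdir : Directed (· ⊆ ·) (fun n : ℕ => {x' | η x' θ ≤ η (xs n) θ}) := by
          intro m n
          rcases le_total (η (xs m) θ) (η (xs n) θ) with h | h
          · exact ⟨n, fun y hy => le_trans hy h, fun y hy => hy⟩
          · exact ⟨m, fun y hy => hy, fun y hy => le_trans hy h⟩
        calc P θ A ≤ P θ (⋃ n, {x' | η x' θ ≤ η (xs n) θ}) := measure_mono hsub
          _ = ⨆ n, P θ {x' | η x' θ ≤ η (xs n) θ} := hdir.measure_iUnion
          _ ≤ α := iSup_le fun n => hxsA n
  have hset : {x | θ ∈ {ϑ : T | α < P ϑ {x' | η x' ϑ ≤ η x ϑ}}} = Aᶜ := by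
    ext x
    simp [hA, hg, not_le]
  rw [hset, tsub_le_iff_right]
  calc (1 : ℝ≥0∞) = P θ Set.univ := measure_univ.symm
    _ = P θ (Aᶜ ∪ A) := by rw [Set.compl_union_self]
    _ ≤ P θ Aᶜ + P θ A := measure_union_le _ _
    _ ≤ P θ Aᶜ + α := add_le_add_right key _
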